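/- Let g be a Lie algebra over a field of characteristic 0 with an sl₂-triple (f,h,e) inducing a grading g = n̄ ⊕ m ⊕ n where [h,x] = 2x for x ∈ n, [h,x] = −2x for x ∈ n̄, [h,x] = 0 for x ∈ m, and n, n̄ abelian. Define on n the product x∘y = ½[x,[f,y]] and let w(y) = ½[f,[f,y]] ∈ n̄. Then for all x, y, z ∈ n: [[x, w(y)], z] = 2((x∘z)∘y − (z∘y)∘x − (x∘y)∘z). -/
import Mathlib

private lemma kkt_key {L : Type*} [LieRing L] (f x y z : L)
    (hxy : ⁅x, y⁆ = 0) (hxz : ⁅x, z⁆ = 0) (hyz : ⁅y, z⁆ = 0) (hzy : ⁅z, y⁆ = 0)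
    (h0 : ⁅y, ⁅x, ⁅f, z⁆⁆⁆ = 0) :
    ⁅⁅x, ⁅f, ⁅f, y⁆⁆⁆, z⁆ =
      ⁅⁅x, ⁅f, z⁆⁆, ⁅f, y⁆⁆ - ⁅⁅z, ⁅f, y⁆⁆, ⁅f, x⁆⁆ - ⁅⁅x, ⁅f, y⁆⁆, ⁅f, z⁆⁆ := by
  have hxf : ⁅x, f⁆ = -⁅f, x⁆ := (lie_skew x f).symm
  have s0 : ⁅x, ⁅f, y⁆⁆ = -⁅⁅f, x⁆, y⁆ := by
    rw [leibniz_lie, hxy, lie_zero, add_zero, hxf, neg_lie]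
  have hA_z : ⁅⁅f, y⁆, z⁆ = -⁅y, ⁅f, z⁆⁆ := by
    rw [lie_lie, hyz, lie_zero, zero_sub]
  have hB_z : ⁅⁅f, x⁆, z⁆ = -⁅x, ⁅f, z⁆⁆ := by
    rw [lie_lie, hxz, lie_zero, zero_sub]
  have sz : ⁅z, ⁅f, y⁆⁆ = ⁅y, ⁅f, z⁆⁆ := by
    rw [leibniz_lie, hzy, lie_zero, add_zero, (lie_skew z f).symm, neg_lie,
      ← lie_skew ⁅f, z⁆ y, neg_neg]
  have hByz : ⁅⁅⁅f, x⁆, y⁆, z⁆ = 0 := by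
    rw [lie_lie, hyz, lie_zero, hB_z, lie_neg, h0, neg_zero, sub_zero]
  have s1 : ⁅x, ⁅f, ⁅f, y⁆⁆⁆ = -⁅⁅f, x⁆, ⁅f, y⁆⁆ - ⁅f, ⁅⁅f, x⁆, y⁆⁆ := by
    rw [leibniz_lie x f ⁅f, y⁆, s0, hxf, neg_lie, lie_neg]
    abel
  have k1 : ⁅⁅x, ⁅f, z⁆⁆, ⁅f, y⁆⁆ = -⁅⁅f, y⁆, ⁅x, ⁅f, z⁆⁆⁆ :=
    (lie_skew ⁅x, ⁅f, z⁆⁆ ⁅f, y⁆).symm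
  have k2 : ⁅⁅z, ⁅f, y⁆⁆, ⁅f, x⁆⁆ = -⁅⁅f, x⁆, ⁅y, ⁅f, z⁆⁆⁆ := by
    rw [sz]
    exact (lie_skew _ _).symm
  have k3 : ⁅⁅x, ⁅f, y⁆⁆, ⁅f, z⁆⁆ = -⁅⁅⁅f, x⁆, y⁆, ⁅f, z⁆⁆ := by
    rw [s0, neg_lie]
  rw [s1, sub_lie, neg_lie, lie_lie ⁅f, x⁆ ⁅f, y⁆ z, lie_lie f ⁅⁅f, x⁆, y⁆ z, hByz,
    lie_zero, hA_z, hB_z, lie_neg, lie_neg, k1, k2, k3]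
  abel


/-- The fundamental bracket identity of the Kantor–Koecher–Tits construction:
`[[x, w(y)], z] = 2((x∘z)∘y − (z∘y)∘x − (x∘y)∘z)` for `x, y, z ∈ n`, where
`x∘y = ½[x,[f,y]]` and `w(y) = ½[f,[f,y]]`. -/
theorem stmt_11 {k : Type*} [Field k] [CharZero k]
    {g : Type*} [LieRing g] [LieAlgebra k g]
    (nb m n : Submodule k g)
    (f h e : g)
    (hf : f ∈ nb) (he : e ∈ n) (hhm : h ∈ m)
    (htriple₁ : ⁅h, e⁆ = (2 : k) • e)
    (htriple₂ : ⁅h, f⁆ = (-2 : k) • f)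
    (htriple₃ : ⁅e, f⁆ = h)
    (hgradn : ∀ x ∈ n, ⁅h, x⁆ = (2 : k) • x)
    (hgradnb : ∀ x ∈ nb, ⁅h, x⁆ = (-2 : k) • x)
    (hgradm : ∀ x ∈ m, ⁅h, x⁆ = 0)
    (hnab : ∀ x ∈ n, ∀ y ∈ n, ⁅x, y⁆ = 0)
    (hnbab : ∀ x ∈ nb, ∀ y ∈ nb, ⁅x, y⁆ = 0)
    (hbrk₁ : ∀ x ∈ n, ∀ y ∈ nb, ⁅x, y⁆ ∈ m)
    (hbrk₂ : ∀ x ∈ m, ∀ y ∈ n, ⁅x, y⁆ ∈ n)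
    (hbrk₃ : ∀ x ∈ m, ∀ y ∈ nb, ⁅x, y⁆ ∈ nb) :
    let jm : g → g → g := fun a b => (2 : k)⁻¹ • ⁅a, ⁅f, b⁆⁆
    let w : g → g := fun y => (2 : k)⁻¹ • ⁅f, ⁅f, y⁆⁆
    ∀ x ∈ n, ∀ y ∈ n, ∀ z ∈ n,
      ⁅⁅x, w y⁆, z⁆ = (2 : k) • (jm (jm x z) y - jm (jm z y) x - jm (jm x y) z) := by
  intro jm w x hx y hy z hz
  have hm' : ∀ u ∈ n, ⁅f, u⁆ ∈ m := fun u hu => by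
    have h1 := m.neg_mem (hbrk₁ u hu f hf)
    rwa [← lie_skew u f, neg_neg] at h1
  have hn' : ∀ u ∈ n, ∀ v ∈ n, ⁅v, ⁅f, u⁆⁆ ∈ n := fun u hu v hv => by
    have h1 := n.neg_mem (hbrk₂ _ (hm' u hu) v hv)
    rwa [lie_skew] at h1
  have h0 : ⁅y, ⁅x, ⁅f, z⁆⁆⁆ = 0 := hnab y hy _ (hn' z hz x hx)
  have key := kkt_key f x y z (hnab x hx y hy) (hnab x hx z hz) (hnab y hy z hz)
    (hnab z hz y hy) h0
  show ⁅⁅x, (2 : k)⁻¹ • ⁅f, ⁅f, y⁆⁆⁆, z⁆ =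
    (2 : k) • ((2 : k)⁻¹ • ⁅(2 : k)⁻¹ • ⁅x, ⁅f, z⁆⁆, ⁅f, y⁆⁆
      - (2 : k)⁻¹ • ⁅(2 : k)⁻¹ • ⁅z, ⁅f, y⁆⁆, ⁅f, x⁆⁆
      - (2 : k)⁻¹ • ⁅(2 : k)⁻¹ • ⁅x, ⁅f, y⁆⁆, ⁅f, z⁆⁆)
  simp only [lie_smul, smul_lie, smul_smul, smul_sub]
  rw [key]
  have h2 : ((2 : k)⁻¹ : k) = (2 : k) * ((2 : k)⁻¹ * (2 : k)⁻¹) := by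
    field_simp
  module
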